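/- Structure of strict codirect solutions for alphabetic morphisms: let σ, σ' : A → Option B be alphabetic morphisms and let w : List A with m := w.length ≥ 2 be a strict codirect solution witnessed by vs : List (List B). Then: (a) σ (w.get 0) ≠ none; (b) for every i with 1 ≤ i ≤ m there exists j ≤ m with (vs.take j).flatten = (w.take i).filterMap σ; writing g i for the least such j: (c) g i > i for every i with 1 ≤ i < m; (d) g m = m; (e) g is increasing on [1..m]: if 1 ≤ i ≤ i' ≤ m then g i ≤ g i'. -/

import Mathlib

private theorem step_ivt (f : ℕ → ℕ) (n : ℕ) (h0 : f 0 = 0)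
    (hstep : ∀ j, j < n → f (j+1) ≤ f j + 1) (t : ℕ) (ht : t ≤ f n) :
    ∃ j ≤ n, f j = t := by
  induction n with
  | zero => exact ⟨0, le_refl 0, by omega⟩
  | succ n ih =>
    by_cases h : t ≤ f n
    · obtain ⟨j, hj, hfj⟩ := ih (fun j hj => hstep j (by omega)) h
      exact ⟨j, by omega, hfj⟩
    · have := hstep n (by omega)
      exact ⟨n+1, le_refl _, by omega⟩

private theorem take_pref' {α : Type*} (l : List α) {a b : ℕ} (h : a ≤ b) :
    l.take a <+: l.take b := by
  have : l.take a = (l.take b).take a := by rw [List.take_take, min_eq_left h]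
  rw [this]; exact List.take_prefix _ _

private theorem flat_pref {B : Type*} {x y : List (List B)} (h : x <+: y) :
    x.flatten <+: y.flatten := by
  obtain ⟨t, rfl⟩ := h
  exact ⟨t.flatten, List.flatten_append.symm⟩

private theorem fm_pref {A B : Type*} (σ : A → Option B) {x y : List A} (h : x <+: y) :
    x.filterMap σ <+: y.filterMap σ := by
  obtain ⟨t, rfl⟩ := h
  exact ⟨t.filterMap σ, List.filterMap_append.symm⟩

private theorem eq_of_pref {B : Type*} {x y l : List B} (hx : x <+: l) (hy : y <+: l)
    (h : x.length = y.length) : x = y :=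
  (List.prefix_of_prefix_length_le hx hy (le_of_eq h)).eq_of_length h


/-- `w` is a strict codirect solution with respect to the alphabetic morphisms
`σ, σ' : A → Option B`, witnessed by `vs`. -/
def AlphStrictCodirectWitness {A B : Type*} (σ σ' : A → Option B)
    (w : List A) (vs : List (List B)) : Prop :=
  ∃ h : vs.length = w.length,
    (∀ k, ∀ hk : k < w.length,
      (vs.get ⟨k, by omega⟩).Sublist (σ' (w.get ⟨k, hk⟩)).toList) ∧
    w.filterMap σ = vs.flatten ∧
    (∀ k ≤ w.length, ((vs.take k).flatten).length ≤ ((w.take k).filterMap σ).length) ∧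
    ∀ k, 1 ≤ k → k < w.length →
      ((vs.take k).flatten).length < ((w.take k).filterMap σ).length

/-- Structure of strict codirect solutions for alphabetic morphisms. -/
theorem strict_codirect_structure {A B : Type*} (σ σ' : A → Option B)
    (w : List A) (vs : List (List B)) (hm : 2 ≤ w.length)
    (hcd : AlphStrictCodirectWitness σ σ' w vs) :
    -- (a)
    σ (w.get ⟨0, by omega⟩) ≠ none ∧
    -- (b)
    (∀ i, 1 ≤ i → i ≤ w.length →
      ∃ j ≤ w.length, (vs.take j).flatten = (w.take i).filterMap σ) ∧
    -- for g i the least such j: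
    ∀ g : ℕ → ℕ,
      (∀ i, 1 ≤ i → i ≤ w.length →
        (vs.take (g i)).flatten = (w.take i).filterMap σ ∧
        ∀ j, (vs.take j).flatten = (w.take i).filterMap σ → g i ≤ j) →
      -- (c)
      (∀ i, 1 ≤ i → i < w.length → i < g i) ∧
      -- (d)
      g w.length = w.length ∧
      -- (e)
      ∀ i i', 1 ≤ i → i ≤ i' → i' ≤ w.length → g i ≤ g i' := by
  obtain ⟨hlen, hsub, hflat, hle, hlt⟩ := hcd
  set m := w.length with hm_def
  -- abbreviations
  set F : ℕ → ℕ := fun j => ((vs.take j).flatten).length with hF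
  set L : ℕ → ℕ := fun i => (((w.take i).filterMap σ)).length with hL
  have hvstake : vs.take m = vs := by rw [← hlen]; exact List.take_length
  have hwtake : w.take m = w := List.take_length
  -- entries of vs have length ≤ 1
  have hent : ∀ j, ∀ hj : j < vs.length, (vs[j]).length ≤ 1 := by
    intro j hj
    have h1 := (hsub j (by omega)).length_le
    simp only [List.get_eq_getElem] at h1
    have h2 : ∀ o : Option B, o.toList.length ≤ 1 := by rintro (_ | b) <;> simp
    exact le_trans h1 (h2 _)
  -- F step
  have hFstep : ∀ j, j < m → F (j+1) ≤ F j + 1 := by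
    intro j hj
    have hj' : j < vs.length := by omega
    have : vs.take (j+1) = vs.take j ++ [vs[j]] := by
      rw [List.take_succ, List.getElem?_eq_getElem hj']
      simp
    simp only [hF, this, List.flatten_append, List.length_append]
    have := hent j hj'
    simp
    omega
  have hF0 : F 0 = 0 := by simp [hF]
  -- monotonicity
  have monoF : ∀ a b, a ≤ b → F a ≤ F b := fun a b hab =>
    (flat_pref (take_pref' vs hab)).length_le
  have monoL : ∀ a b, a ≤ b → L a ≤ L b := fun a b hab =>
    (fm_pref σ (take_pref' w hab)).length_le
  -- prefix of full flatten
  have prefF : ∀ j, (vs.take j).flatten <+: vs.flatten :=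
    fun j => flat_pref (List.take_prefix j vs)
  have prefL : ∀ i, (w.take i).filterMap σ <+: vs.flatten := by
    intro i
    rw [← hflat]
    exact fm_pref σ (List.take_prefix i w)
  have hFm : F m = vs.flatten.length := by simp only [hF, hvstake]
  have hLm : L m = vs.flatten.length := by show ((w.take m).filterMap σ).length = _; rw [hwtake, hflat]
  -- (a)
  have ha : σ (w.get ⟨0, by omega⟩) ≠ none := by
    intro h0
    have h1 := hlt 1 le_rfl (by omega)
    have : ((w.take 1).filterMap σ).length = 0 := by
      cases w with
      | nil => simp only [List.length_nil] at hm_def; omega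
      | cons a t =>
        simp only [List.get_eq_getElem] at h0
        simp_all
    omega
  refine ⟨ha, ?_, ?_⟩
  · -- (b)
    intro i hi1 him
    have ht : L i ≤ F m := by
      rw [hFm]
      exact le_trans (monoL i m him) (le_of_eq hLm)
    obtain ⟨j, hjm, hfj⟩ := step_ivt F m hF0 hFstep (L i) ht
    exact ⟨j, hjm, eq_of_pref (prefF j) (prefL i) hfj⟩
  · -- g properties
    intro g hg
    have hFg : ∀ i, 1 ≤ i → i ≤ m → F (g i) = L i := by
      intro i h1 h2
      simp only [hF, hL, (hg i h1 h2).1]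
    have hc : ∀ i, 1 ≤ i → i < m → i < g i := by
      intro i h1 h2
      by_contra hcon
      push_neg at hcon
      have h3 := monoF (g i) i hcon
      have h4 := hFg i h1 (by omega)
      have h5 := hlt i h1 h2
      simp only [hF, hL] at h3 h4 h5
      omega
    have hd : g m = m := by
      have hgm := hg m (by omega) le_rfl
      have hle_m : g m ≤ m := hgm.2 m (by rw [hvstake, hwtake, hflat])
      rcases lt_or_eq_of_le hle_m with hlt_m | heq
      · exfalso
        have hFgm : F (g m) = L m := hFg m (by omega) le_rfl
        rcases Nat.eq_zero_or_pos (g m) with h0 | hpos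
        · -- g m = 0 : vs.flatten empty but L 1 ≥ 1
          have h1 := hlt 1 le_rfl (by omega)
          have h2 := monoL 1 m (by omega)
          rw [h0, hF0] at hFgm
          simp only [hF, hL] at *
          omega
        · have h1 := hlt (g m) hpos hlt_m
          have h2 := monoL (g m) m (le_of_lt hlt_m)
          simp only [hF, hL] at *
          omega
      · exact heq
    refine ⟨hc, hd, ?_⟩
    intro i i' h1 h2 h3
    by_contra hcon
    push_neg at hcon
    have hFi := hFg i h1 (le_trans h2 h3)
    have hFi' := hFg i' (le_trans h1 h2) h3
    have hmono1 := monoF (g i') (g i) (le_of_lt hcon)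
    have hmono2 := monoL i i' h2
    have heqF : F (g i') = F (g i) := by omega
    have heq : (vs.take (g i')).flatten = (vs.take (g i)).flatten :=
      eq_of_pref (prefF (g i')) (prefF (g i)) heqF
    have := (hg i h1 (le_trans h2 h3)).2 (g i') (by rw [heq, (hg i h1 (le_trans h2 h3)).1])
    omega
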